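/- arXiv:1901.01109 — 3 statements merged into one kernel-verified Lean document; each statement's English description precedes it below -/
import Mathlib

section
/- For all real $x > 0$, $a > 0$, complex $b$, and real $c > \max\{0, (1 - \mathrm{Re}(b))/a\}$, the Mellin–Barnes integral identity holds: $\frac{1}{2\pi i}\int_{c-i\infty}^{c+i\infty} \Gamma(s)\,\zeta(as+b)\, x^{-s}\, ds = \sum_{n=1}^{\infty} \frac{e^{-n^a x}}{n^b}$. -/
open Complex Real Filter MeasureTheory Set
open scoped FourierTransform

lemma integrable_exp_lin_exp {c : ℝ} (hc : 0 < c) :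
    Integrable (fun u : ℝ => Real.exp (-(c * u) - Real.exp (-u))) := by
  have h1 : ∀ u ∈ (univ : Set ℝ),
      HasDerivWithinAt (fun u : ℝ => Real.exp (-u)) (-Real.exp (-u)) univ u := by
    intro u _
    have h := ((Real.hasDerivAt_exp (-u)).comp u (hasDerivAt_neg u)).hasDerivWithinAt (s := univ)
    simpa [Function.comp_def, mul_comm] using h
  have himg : (fun u : ℝ => Real.exp (-u)) '' univ = Ioi 0 := by
    have : (fun u : ℝ => Real.exp (-u)) = Real.exp ∘ Neg.neg := rfl
    rw [this, Set.image_comp, Set.image_univ_of_surjective neg_surjective, Set.image_univ,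
      Real.range_exp]
  have hinj : univ.InjOn (fun u : ℝ => Real.exp (-u)) := by
    intro u _ v _ h
    simpa using Real.exp_injective h
  have key := (integrableOn_image_iff_integrableOn_abs_deriv_smul MeasurableSet.univ h1 hinj
      (fun x : ℝ => Real.exp (-x) * x ^ (c - 1)))
  rw [himg] at key
  have hG : IntegrableOn (fun x : ℝ => Real.exp (-x) * x ^ (c - 1)) (Ioi 0) :=
    Real.GammaIntegral_convergent hc
  have h2 := key.mp hG
  rw [integrableOn_univ] at h2
  refine h2.congr ?_
  filter_upwards with u
  have hpos : (0:ℝ) < Real.exp (-u) := Real.exp_pos _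
  rw [abs_neg, abs_of_pos hpos]
  show Real.exp (-u) • (Real.exp (-Real.exp (-u)) * Real.exp (-u) ^ (c - 1)) = _
  rw [smul_eq_mul, ← Real.exp_mul]
  rw [← Real.exp_add, ← Real.exp_add]
  congr 1
  ring

lemma integrable_fourier_gammaker {σ : ℝ} (hσ : 0 < σ) :
    Integrable (𝓕 (fun u : ℝ => ((Real.exp (-(σ * u) - Real.exp (-u)) : ℝ) : ℂ))) := by
  set g : ℝ → ℝ := fun u => Real.exp (-(σ * u) - Real.exp (-u)) with hgdef
  set G : ℝ → ℂ := fun u => ((g u : ℝ) : ℂ) with hGdef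
  have hexp : ∀ u : ℝ, HasDerivAt (fun u : ℝ => Real.exp (-u)) (-Real.exp (-u)) u := by
    intro u
    have h := (Real.hasDerivAt_exp (-u)).comp u (hasDerivAt_neg u)
    simpa [Function.comp_def, mul_comm] using h
  have hinner : ∀ u : ℝ, HasDerivAt (fun u : ℝ => -(σ * u) - Real.exp (-u))
      (-σ + Real.exp (-u)) u := by
    intro u
    have h1 : HasDerivAt (fun u : ℝ => -(σ * u)) (-σ) u := by
      simpa [Pi.neg_def] using ((hasDerivAt_id u).const_mul σ).neg
    simpa [sub_eq_add_neg, Pi.add_def, Pi.neg_def] using h1.sub (hexp u)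
  have hg' : ∀ u : ℝ, HasDerivAt g ((-σ + Real.exp (-u)) * g u) u := by
    intro u
    have h := (Real.hasDerivAt_exp _).comp u (hinner u)
    simpa [hgdef, Function.comp_def, mul_comm] using h
  have hg1' : ∀ u : ℝ, HasDerivAt (fun u => (-σ + Real.exp (-u)) * g u)
      (σ ^ 2 * g u - (2 * σ + 1) * (Real.exp (-u) * g u)
        + Real.exp (-u) * (Real.exp (-u) * g u)) u := by
    intro u
    have h1 : HasDerivAt (fun u : ℝ => -σ + Real.exp (-u)) (-Real.exp (-u)) u := by
      simpa using (hexp u).const_add (-σ)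
    have h : HasDerivAt (fun u => (-σ + Real.exp (-u)) * g u) _ u := h1.mul (hg' u)
    convert h using 1
    ring
  -- integrability of the building blocks
  have hgint : Integrable g := integrable_exp_lin_exp hσ
  have hE1 : Integrable (fun u => Real.exp (-u) * g u) := by
    refine (integrable_exp_lin_exp (show (0:ℝ) < σ + 1 by linarith)).congr ?_
    filter_upwards with u
    rw [hgdef]
    show Real.exp _ = _
    rw [← Real.exp_add]
    congr 1
    ring
  have hE2 : Integrable (fun u => Real.exp (-u) * (Real.exp (-u) * g u)) := by
    refine (integrable_exp_lin_exp (show (0:ℝ) < σ + 2 by linarith)).congr ?_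
    filter_upwards with u
    rw [hgdef]
    show Real.exp _ = _
    rw [← Real.exp_add, ← Real.exp_add]
    congr 1
    ring
  have hg1int : Integrable (fun u => (-σ + Real.exp (-u)) * g u) := by
    refine ((hgint.const_mul (-σ)).add hE1).congr ?_
    filter_upwards with u
    simp only [Pi.add_apply]
    ring
  have hg2int : Integrable (fun u => σ ^ 2 * g u - (2 * σ + 1) * (Real.exp (-u) * g u)
      + Real.exp (-u) * (Real.exp (-u) * g u)) :=
    ((hgint.const_mul _).sub (hE1.const_mul _)).add hE2
  -- smoothness
  have hcg : ContDiff ℝ 2 g := by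
    have : ContDiff ℝ 2 (fun u : ℝ => -(σ * u) - Real.exp (-u)) := by
      exact ((contDiff_const.mul contDiff_id).neg.sub
        (Real.contDiff_exp.comp contDiff_id.neg)).of_le le_top
    exact Real.contDiff_exp.comp this
  have hcG : ContDiff ℝ 2 G := Complex.ofRealCLM.contDiff.comp hcg
  -- derivatives of G
  have hderivG : deriv G = fun u => (((-σ + Real.exp (-u)) * g u : ℝ) : ℂ) :=
    funext fun u => ((hg' u).ofReal_comp).deriv
  have hderiv2G : deriv (deriv G) = fun u =>
      ((σ ^ 2 * g u - (2 * σ + 1) * (Real.exp (-u) * g u)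
        + Real.exp (-u) * (Real.exp (-u) * g u) : ℝ) : ℂ) := by
    rw [hderivG]
    exact funext fun u => ((hg1' u).ofReal_comp).deriv
  -- integrability of iterated derivatives
  have hIter : ∀ (k n : ℕ), k ≤ (0 : ℕ∞) → n ≤ (2 : ℕ∞) →
      Integrable (fun v : ℝ => ‖v‖ ^ k * ‖iteratedFDeriv ℝ n G v‖) := by
    intro k n hk hn
    have hk0 : k = 0 := by exact_mod_cast Nat.le_zero.mp (by exact_mod_cast hk)
    have hn2 : n ≤ 2 := by exact_mod_cast hn
    subst hk0
    · simp only [pow_zero, one_mul]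
      interval_cases n
      · simp only [norm_iteratedFDeriv_zero]
        exact hgint.ofReal.norm
      · have : ∀ v : ℝ, ‖iteratedFDeriv ℝ 1 G v‖ = ‖deriv G v‖ := by
          intro v
          rw [norm_iteratedFDeriv_eq_norm_iteratedDeriv, iteratedDeriv_one]
        simp only [this, hderivG]
        exact hg1int.ofReal.norm
      · have : ∀ v : ℝ, ‖iteratedFDeriv ℝ 2 G v‖ = ‖deriv (deriv G) v‖ := by
          intro v
          rw [norm_iteratedFDeriv_eq_norm_iteratedDeriv, iteratedDeriv_succ, iteratedDeriv_one]
        simp only [this, hderiv2G]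
        exact hg2int.ofReal.norm
  -- decay bound
  obtain ⟨C, hC0, hCb⟩ : ∃ C : ℝ, 0 ≤ C ∧ ∀ w : ℝ, ‖w‖ ^ 2 * ‖𝓕 G w‖ ≤ C := by
    refine ⟨(2 * π) ^ 0 * (2 * 0 + 2) ^ 2 *
      ∑ p ∈ Finset.range (0 + 1) ×ˢ Finset.range (2 + 1),
        ∫ v : ℝ, ‖v‖ ^ p.1 * ‖iteratedFDeriv ℝ p.2 G v‖, ?_, fun w => ?_⟩
    · positivity
    · have h := Real.pow_mul_norm_iteratedFDeriv_fourier_le (K := 0) (N := 2)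
        hcG hIter (le_refl (0 : ℕ∞)) (le_refl (2 : ℕ∞)) w
      simpa [norm_iteratedFDeriv_zero] using h
  -- continuity
  have hGint : Integrable G := hgint.ofReal
  have hcont : Continuous (𝓕 G) := by
    have h := Real.contDiff_fourier (f := G) (N := 0) ?_
    · exact h.continuous
    · intro n hn
      have hn0 : n = 0 := by exact_mod_cast Nat.le_zero.mp (by exact_mod_cast hn)
      subst hn0
      simpa using hGint.norm
  have hmeas : AEStronglyMeasurable (𝓕 G) := hcont.aestronglyMeasurable
  have hbound : ∀ w : ℝ, 1 < |w| → ‖𝓕 G w‖ ≤ C * |w| ^ (-2 : ℝ) := by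
    intro w hw
    have hb := hCb w
    have hw0 : (0:ℝ) < |w| := by linarith
    rw [Real.norm_eq_abs] at hb
    rw [Real.rpow_neg hw0.le, Real.rpow_two]
    have h2 : (0:ℝ) < |w| ^ 2 := by positivity
    rw [show C * (|w| ^ 2)⁻¹ = C / |w| ^ 2 by ring, le_div_iff₀ h2]
    nlinarith [hb]
  have htail : ∀ s : Set ℝ, MeasurableSet s → (∀ w ∈ s, 1 < |w|) →
      IntegrableOn (𝓕 G) s := by
    intro s hsm hs
    have hsub : s ⊆ (Iio (-1) ∪ Ioi 1 : Set ℝ) := by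
      intro w hw
      have h1 := hs w hw
      rcases abs_cases w with ⟨he, _⟩ | ⟨he, _⟩
      · right; rw [he] at h1; exact h1
      · left; rw [he] at h1; simp only [mem_Iio]; linarith
    refine IntegrableOn.mono_set ?_ hsub
    rw [integrableOn_union]
    constructor
    · rw [← (Measure.measurePreserving_neg (volume : Measure ℝ)).integrableOn_comp_preimage
        (Homeomorph.neg ℝ).measurableEmbedding]
      simp only [Function.comp_def, neg_preimage, neg_Iio, neg_neg]
      refine Integrable.mono' (g := fun w : ℝ => C * w ^ (-2 : ℝ))
        (((integrableOn_Ioi_rpow_of_lt (by norm_num) one_pos)).const_mul C) ?_ ?_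
      · exact (hcont.comp continuous_neg).aestronglyMeasurable.restrict
      · rw [ae_restrict_iff' measurableSet_Ioi]
        filter_upwards with w hw
        have hw1 : (1:ℝ) < w := hw
        have := hbound (-w) (by rw [abs_neg, abs_of_pos (by linarith)]; exact hw1)
        rwa [abs_neg, abs_of_pos (by linarith)] at this
    · refine Integrable.mono' (g := fun w : ℝ => C * w ^ (-2 : ℝ))
        (((integrableOn_Ioi_rpow_of_lt (by norm_num) one_pos)).const_mul C) hmeas.restrict ?_
      rw [ae_restrict_iff' measurableSet_Ioi]
      filter_upwards with w hw
      have hw1 : (1:ℝ) < w := hw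
      have := hbound w (by rw [abs_of_pos (by linarith)]; exact hw1)
      rwa [abs_of_pos (by linarith)] at this
  have : (univ : Set ℝ) = Icc (-2) 2 ∪ {w : ℝ | 1 < |w|} := by
    ext w
    simp only [mem_univ, mem_union, mem_Icc, mem_setOf_eq, true_iff]
    by_cases h : 1 < |w|
    · right; exact h
    · left
      push_neg at h
      rw [abs_le] at h
      constructor <;> linarith [h.1, h.2]
  rw [← integrableOn_univ, this, integrableOn_union]
  exact ⟨hcont.continuousOn.integrableOn_compact isCompact_Icc,
    htail _ ((isOpen_lt (continuous_const : Continuous fun _ : ℝ => (1:ℝ)) (continuous_norm.congr (fun w : ℝ => (Real.norm_eq_abs w)))).measurableSet) (fun w hw => hw)⟩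

lemma gamma_vertical_integrable {σ : ℝ} (hσ : 0 < σ) :
    Integrable (fun t : ℝ => Complex.Gamma ((σ : ℂ) + (t : ℂ) * Complex.I)) := by
  have key : ∀ t : ℝ, Complex.Gamma ((σ:ℂ) + (t:ℂ) * Complex.I)
      = 𝓕 (fun u : ℝ => ((Real.exp (-(σ * u) - Real.exp (-u)) : ℝ) : ℂ)) (t / (2 * π)) := by
    intro t
    have hre : ((σ:ℂ) + (t:ℂ) * Complex.I).re = σ := by simp
    have him : ((σ:ℂ) + (t:ℂ) * Complex.I).im = t := by simp
    rw [Complex.Gamma_eq_integral (by rw [hre]; exact hσ), Complex.GammaIntegral_eq_mellin,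
      mellin_eq_fourier, hre, him]
    refine congrArg (fun F : ℝ → ℂ => 𝓕 F (t / (2 * π))) ?_
    funext u
    rw [Complex.real_smul, ← Complex.ofReal_mul, ← Real.exp_add]
    norm_num
    ring_nf
  have h2π : (2 * π : ℝ) ≠ 0 := by positivity
  have := (integrable_fourier_gammaker hσ).comp_div h2π
  exact this.congr (by filter_upwards with t; exact (key t).symm)

lemma gamma_mellinInv {σ y : ℝ} (hσ : 0 < σ) (hy : 0 < y) :
    ((1 / (2 * π) : ℝ)) • ∫ t : ℝ, (y : ℂ) ^ (-((σ:ℂ) + (t:ℂ) * Complex.I)) •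
      Complex.Gamma ((σ:ℂ) + (t:ℂ) * Complex.I) = Complex.exp (-(y:ℂ)) := by
  set f : ℝ → ℂ := fun x : ℝ => ((Real.exp (-x) : ℝ) : ℂ) with hfdef
  have hf : MellinConvergent f σ := by
    have h := Complex.GammaIntegral_convergent (s := (σ:ℂ)) (by simpa using hσ)
    refine (h.congr_fun ?_ measurableSet_Ioi)
    intro t ht
    show (↑(Real.exp (-t)) : ℂ) * _ = _ • _
    rw [smul_eq_mul, mul_comm]
  have hFf : Complex.VerticalIntegrable (mellin f) σ := by
    refine (gamma_vertical_integrable hσ).congr ?_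
    filter_upwards with t
    rw [← Complex.GammaIntegral_eq_mellin, ← Complex.Gamma_eq_integral (by simp [hσ])]
  have hfx : ContinuousAt f y :=
    (Complex.continuous_ofReal.comp (Real.continuous_exp.comp continuous_neg)).continuousAt
  have h := mellinInv_mellin_eq σ f hy hf hFf hfx
  have heq : ∀ t : ℝ, (y:ℂ) ^ (-((σ:ℂ) + (t:ℂ) * Complex.I)) •
      Complex.Gamma ((σ:ℂ) + (t:ℂ) * Complex.I)
      = (y:ℂ) ^ (-((σ:ℂ) + (t:ℂ) * Complex.I)) • mellin f ((σ:ℂ) + (t:ℂ) * Complex.I) := by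
    intro t
    rw [← Complex.GammaIntegral_eq_mellin, ← Complex.Gamma_eq_integral (by simp [hσ])]
  simp_rw [heq]
  show mellinInv σ (mellin f) y = _
  rw [h, hfdef]
  show ((Real.exp (-y) : ℝ) : ℂ) = _
  rw [Complex.ofReal_exp, Complex.ofReal_neg]

/-- Mellin–Barnes integral identity
`(1/(2πi)) ∫_{c-i∞}^{c+i∞} Γ(s) ζ(as+b) x^{-s} ds = ∑_{n≥1} e^{-n^a x} / n^b`. -/
theorem mellin_barnes_zeta (x a : ℝ) (b : ℂ) (c : ℝ)
    (hx : 0 < x) (ha : 0 < a) (hc0 : 0 < c) (hc : (1 - b.re) / a < c) :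
    (2 * (π : ℂ) * Complex.I)⁻¹ *
      (Complex.I * ∫ t : ℝ, Complex.Gamma ((c : ℂ) + (t : ℂ) * Complex.I) *
        riemannZeta ((a : ℂ) * ((c : ℂ) + (t : ℂ) * Complex.I) + b) *
        (x : ℂ) ^ (-((c : ℂ) + (t : ℂ) * Complex.I))) =
    ∑' n : ℕ, Complex.exp (-((((n + 1 : ℕ) : ℝ) ^ a * x : ℝ) : ℂ)) / ((n + 1 : ℕ) : ℂ) ^ b := by
  have hΓ := gamma_vertical_integrable hc0
  have hac : 1 < a * c + b.re := by
    rw [div_lt_iff₀ ha] at hc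
    nlinarith
  set s : ℝ → ℂ := fun t => (c:ℂ) + (t:ℂ) * Complex.I with hsdef
  have hsre : ∀ t : ℝ, ((a:ℂ) * s t + b).re = a * c + b.re := by
    intro t
    simp [hsdef, Complex.add_re, Complex.mul_re]
  set F : ℕ → ℝ → ℂ := fun n t => Complex.Gamma (s t) *
      ((n + 1 : ℕ) : ℂ) ^ (-((a:ℂ) * s t + b)) * (x:ℂ) ^ (-(s t)) with hFdef
  -- pointwise expansion of zeta
  have hzeta : ∀ t : ℝ, Complex.Gamma (s t) * riemannZeta ((a:ℂ) * s t + b) * (x:ℂ) ^ (-(s t))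
      = ∑' n : ℕ, F n t := by
    intro t
    rw [zeta_eq_tsum_one_div_nat_add_one_cpow (by rw [hsre t]; exact hac)]
    rw [← tsum_mul_left, ← tsum_mul_right]
    congr 1
    funext n
    rw [hFdef]
    simp only
    rw [one_div, ← Complex.cpow_neg]
    norm_num
  -- norms of the summands
  have hr : ∀ n : ℕ, (0:ℝ) < ((n + 1 : ℕ) : ℝ) := by
    intro n; positivity
  have hnorm : ∀ n : ℕ, ∀ t : ℝ, ‖F n t‖ =
      ‖Complex.Gamma (s t)‖ * (((n + 1 : ℕ) : ℝ) ^ (-(a * c + b.re)) * x ^ (-c : ℝ)) := by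
    intro n t
    rw [hFdef]
    simp only
    rw [norm_mul, norm_mul]
    have h1 : ‖((n + 1 : ℕ) : ℂ) ^ (-((a:ℂ) * s t + b))‖
        = ((n + 1 : ℕ) : ℝ) ^ (-(a * c + b.re)) := by
      have hcast : ((n + 1 : ℕ) : ℂ) = (((n + 1 : ℕ) : ℝ) : ℂ) := by push_cast; ring
      rw [hcast, Complex.norm_cpow_eq_rpow_re_of_pos (hr n)]
      congr 1
      rw [Complex.neg_re, hsre t]
    have h2 : ‖(x:ℂ) ^ (-(s t))‖ = x ^ (-c : ℝ) := by
      rw [Complex.norm_cpow_eq_rpow_re_of_pos hx]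
      congr 1
      simp [hsdef]
    rw [h1, h2, mul_assoc]
  -- measurability
  have hmeasΓ : AEStronglyMeasurable (fun t : ℝ => Complex.Gamma (s t)) := hΓ.aestronglyMeasurable
  have hcont : ∀ (w : ℂ), w ≠ 0 → ∀ (e : ℝ → ℂ), Continuous e →
      Continuous (fun t : ℝ => w ^ (e t)) := by
    intro w hw e he
    have hrw : (fun t : ℝ => w ^ (e t)) = fun t : ℝ => Complex.exp (Complex.log w * e t) := by
      funext t
      rw [Complex.cpow_def_of_ne_zero hw]
    rw [hrw]
    exact Complex.continuous_exp.comp (continuous_const.mul he)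
  have hscont : Continuous s := by
    rw [hsdef]
    fun_prop
  have hmeasF : ∀ n : ℕ, AEStronglyMeasurable (F n) := by
    intro n
    rw [hFdef]
    exact (hmeasΓ.mul (hcont _ (by exact_mod_cast (Nat.succ_ne_zero n)) _
        (by fun_prop)).aestronglyMeasurable).mul
      (hcont _ (by exact_mod_cast hx.ne') _ hscont.neg).aestronglyMeasurable
  have hFint : ∀ n : ℕ, Integrable (F n) := by
    intro n
    refine Integrable.mono' (g := fun t => ‖Complex.Gamma (s t)‖ *
      (((n + 1 : ℕ) : ℝ) ^ (-(a * c + b.re)) * x ^ (-c : ℝ)))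
      (hΓ.norm.mul_const _) (hmeasF n) ?_
    filter_upwards with t
    rw [hnorm n t]
  have hFnormint : ∀ n : ℕ, (∫ t : ℝ, ‖F n t‖) = (∫ t : ℝ, ‖Complex.Gamma (s t)‖) *
      (((n + 1 : ℕ) : ℝ) ^ (-(a * c + b.re)) * x ^ (-c : ℝ)) := by
    intro n
    rw [← integral_mul_const]
    congr 1
    funext t
    exact hnorm n t
  have hsummable : Summable (fun n : ℕ => ∫ t : ℝ, ‖F n t‖) := by
    have hs0 : Summable (fun n : ℕ => ((n + 1 : ℕ) : ℝ) ^ (-(a * c + b.re))) := by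
      have h := Real.summable_nat_rpow (p := -(a * c + b.re)) |>.mpr (by linarith)
      exact_mod_cast (summable_nat_add_iff 1).mpr h
    simp_rw [hFnormint]
    exact (hs0.mul_right _).mul_left _
  -- swap integral and sum
  have hswap : (∫ t : ℝ, Complex.Gamma (s t) * riemannZeta ((a:ℂ) * s t + b) * (x:ℂ) ^ (-(s t)))
      = ∑' n : ℕ, ∫ t : ℝ, F n t := by
    rw [show (fun t : ℝ => Complex.Gamma (s t) * riemannZeta ((a:ℂ) * s t + b) * (x:ℂ) ^ (-(s t)))
      = fun t => ∑' n : ℕ, F n t from funext hzeta]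
    exact (integral_tsum_of_summable_integral_norm hFint hsummable).symm
  -- constant simplification
  have hIconst : (2 * (π : ℂ) * Complex.I)⁻¹ * Complex.I = (((2 * π)⁻¹ : ℝ) : ℂ) := by
    have hπ : (π : ℂ) ≠ 0 := by exact_mod_cast Real.pi_ne_zero
    field_simp
    push_cast
    field_simp
  -- per-term evaluation
  have hterm : ∀ n : ℕ, (((2 * π)⁻¹ : ℝ) : ℂ) * ∫ t : ℝ, F n t
      = Complex.exp (-((((n + 1 : ℕ) : ℝ) ^ a * x : ℝ) : ℂ)) / ((n + 1 : ℕ) : ℂ) ^ b := by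
    intro n
    set y : ℝ := ((n + 1 : ℕ) : ℝ) ^ a * x with hydef
    have hy : 0 < y := mul_pos (Real.rpow_pos_of_pos (hr n) a) hx
    have hFy : ∀ t : ℝ, F n t = ((y : ℂ) ^ (-(s t)) • Complex.Gamma (s t)) *
        ((n + 1 : ℕ) : ℂ) ^ (-b) := by
      intro t
      rw [hFdef]
      simp only [smul_eq_mul]
      have hb1 : ((n + 1 : ℕ) : ℂ) ^ (-((a:ℂ) * s t + b))
          = ((n + 1 : ℕ) : ℂ) ^ (-((a:ℂ) * s t)) * ((n + 1 : ℕ) : ℂ) ^ (-b) := by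
        rw [← Complex.cpow_add _ _ (by exact_mod_cast (Nat.succ_ne_zero n))]
        congr 1
        ring
      have hb2 : ((n + 1 : ℕ) : ℂ) ^ (-((a:ℂ) * s t))
          = ((((n + 1 : ℕ) : ℝ) ^ a : ℝ) : ℂ) ^ (-(s t)) := by
        rw [show ((n + 1 : ℕ) : ℂ) = (((n + 1 : ℕ) : ℝ) : ℂ) by push_cast; ring,
          show -((a:ℂ) * s t) = (a:ℂ) * (-(s t)) by ring,
          Complex.cpow_mul_ofReal_nonneg (hr n).le a (-(s t))]
      have hb3 : ((y : ℝ) : ℂ) ^ (-(s t)) =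
          ((((n + 1 : ℕ) : ℝ) ^ a : ℝ) : ℂ) ^ (-(s t)) * ((x : ℝ) : ℂ) ^ (-(s t)) := by
        rw [hydef, Complex.ofReal_mul]
        exact mul_cpow_ofReal_nonneg (Real.rpow_nonneg (hr n).le a) hx.le _
      rw [hb1, hb2, hb3]
      ring
    calc (((2 * π)⁻¹ : ℝ) : ℂ) * ∫ t : ℝ, F n t
        = (((2 * π)⁻¹ : ℝ) : ℂ) * ((∫ t : ℝ, (y : ℂ) ^ (-(s t)) • Complex.Gamma (s t)) *
            ((n + 1 : ℕ) : ℂ) ^ (-b)) := by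
          congr 1
          rw [show F n = fun t => ((y : ℂ) ^ (-(s t)) • Complex.Gamma (s t)) *
              ((n + 1 : ℕ) : ℂ) ^ (-b) from funext hFy]
          exact integral_mul_const _ _
      _ = (((1 / (2 * π) : ℝ)) • ∫ t : ℝ, (y : ℂ) ^ (-(s t)) • Complex.Gamma (s t)) *
            ((n + 1 : ℕ) : ℂ) ^ (-b) := by
          rw [Complex.real_smul]
          push_cast
          ring
      _ = Complex.exp (-(y:ℂ)) * ((n + 1 : ℕ) : ℂ) ^ (-b) := by
          rw [gamma_mellinInv hc0 hy]
      _ = Complex.exp (-((y : ℝ) : ℂ)) / ((n + 1 : ℕ) : ℂ) ^ b := by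
          rw [Complex.cpow_neg, div_eq_mul_inv]
  -- assemble
  rw [hswap, ← mul_assoc, hIconst, ← tsum_mul_left]
  exact tsum_congr hterm
end

section
/- For all real $x > 0$, $a > 0$, complex $b$, and real $c > (1 - \mathrm{Re}(b))/a$ with $c > 0$, we have $\frac{1}{2\pi i}\int_{c-i\infty}^{c+i\infty} \Gamma(s)\,\zeta(as+b)^2\, x^{-s}\, ds = \sum_{n=1}^{\infty} \frac{d(n)}{n^b} e^{-n^a x}$, where $d(n)$ is the number of divisors of $n$. -/
open Complex Real Filter MeasureTheory
open scoped LSeries.notation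



lemma aux_norm_Gamma_le {s : ℂ} (hs : 0 < s.re) :
    ‖Complex.Gamma s‖ ≤ Real.Gamma s.re := by
  rw [Complex.Gamma_eq_integral hs, Real.Gamma_eq_integral hs, Complex.GammaIntegral]
  refine le_trans (norm_integral_le_integral_norm _) (le_of_eq ?_)
  refine setIntegral_congr_fun measurableSet_Ioi fun t ht => ?_
  rw [norm_mul, Complex.norm_real, Real.norm_eq_abs,
    Complex.norm_cpow_eq_rpow_re_of_pos ht, abs_of_pos (Real.exp_pos _)]
  simp [Complex.sub_re]

lemma aux_inv_sq_integrable {c : ℝ} (hc : 0 < c) :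
    Integrable (fun t : ℝ => (c ^ 2 + t ^ 2)⁻¹) := by
  have h := (integrable_inv_one_add_sq.comp_div (ne_of_gt hc)).const_mul (c ^ 2)⁻¹
  refine h.congr (Eventually.of_forall fun t => ?_)
  field_simp

lemma aux_norm_Gamma_bound {c t : ℝ} (hc : 0 < c) :
    ‖Complex.Gamma ((c : ℂ) + (t : ℂ) * Complex.I)‖ ≤
      Real.Gamma (c + 2) / (c ^ 2 + t ^ 2) := by
  set s : ℂ := (c : ℂ) + (t : ℂ) * Complex.I with hs
  have hsre : s.re = c := by simp [hs]
  have hsim : s.im = t := by simp [hs]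
  have hns : s ≠ 0 := fun h => by rw [h] at hsre; simp at hsre; linarith
  have hns1 : s + 1 ≠ 0 := fun h => by
    have := congrArg Complex.re h
    simp [hsre] at this; linarith
  have h2 : Complex.Gamma (s + 2) = (s + 1) * (s * Complex.Gamma s) := by
    have e1 : s + 2 = (s + 1) + 1 := by ring
    rw [e1, Complex.Gamma_add_one _ hns1, Complex.Gamma_add_one _ hns]
  have hsq : (c ^ 2 + t ^ 2) ≤ ‖s + 1‖ * ‖s‖ := by
    have h1 : ‖s‖ ^ 2 = c ^ 2 + t ^ 2 := by
      rw [Complex.sq_norm, Complex.normSq_apply, hsre, hsim]; ring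
    have h2 : ‖s‖ ≤ ‖s + 1‖ := by
      rw [← Real.sqrt_sq (norm_nonneg s), ← Real.sqrt_sq (norm_nonneg (s + 1))]
      apply Real.sqrt_le_sqrt
      rw [Complex.sq_norm, Complex.sq_norm,
        Complex.normSq_apply, Complex.normSq_apply]
      simp only [Complex.add_re, Complex.add_im, Complex.one_re, Complex.one_im, hsre, hsim]
      nlinarith
    calc c ^ 2 + t ^ 2 = ‖s‖ * ‖s‖ := by rw [← h1]; ring
    _ ≤ ‖s + 1‖ * ‖s‖ := by apply mul_le_mul_of_nonneg_right h2 (norm_nonneg _)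
  have hnorm : ‖Complex.Gamma (s + 2)‖ = ‖s + 1‖ * ‖s‖ * ‖Complex.Gamma s‖ := by
    rw [h2, norm_mul, norm_mul]; ring
  have hle : ‖Complex.Gamma (s + 2)‖ ≤ Real.Gamma (c + 2) := by
    have : (s + 2).re = c + 2 := by simp [hsre]
    rw [← this]
    exact aux_norm_Gamma_le (by rw [this]; linarith)
  rw [le_div_iff₀ (by positivity : (0:ℝ) < c ^ 2 + t ^ 2)]
  calc ‖Complex.Gamma s‖ * (c ^ 2 + t ^ 2)
      ≤ ‖Complex.Gamma s‖ * (‖s + 1‖ * ‖s‖) :=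
        mul_le_mul_of_nonneg_left hsq (norm_nonneg _)
    _ = ‖Complex.Gamma (s + 2)‖ := by rw [hnorm]; ring
    _ ≤ Real.Gamma (c + 2) := hle

lemma aux_Gamma_integrable {c : ℝ} (hc : 0 < c) :
    Integrable (fun t : ℝ => Complex.Gamma ((c : ℂ) + (t : ℂ) * Complex.I)) := by
  have hcont : Continuous (fun t : ℝ => Complex.Gamma ((c : ℂ) + (t : ℂ) * Complex.I)) := by
    refine continuous_iff_continuousAt.mpr fun t => ?_
    refine (Complex.differentiableAt_Gamma _ fun m => ?_).continuousAt.comp (by fun_prop)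
    intro h
    have := congrArg Complex.re h
    simp at this
    have hm : (0:ℝ) ≤ (m : ℝ) := m.cast_nonneg
    nlinarith
  refine Integrable.mono' ((aux_inv_sq_integrable hc).const_mul (Real.Gamma (c + 2)))
    hcont.aestronglyMeasurable (Eventually.of_forall fun t => ?_)
  rw [← div_eq_mul_inv]
  exact aux_norm_Gamma_bound hc

lemma aux_mellin_exp {s : ℂ} (hs : 0 < s.re) :
    mellin (fun t : ℝ => Complex.exp (-(t : ℂ))) s = Complex.Gamma s := by
  rw [Complex.Gamma_eq_integral hs, Complex.GammaIntegral, mellin]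
  refine setIntegral_congr_fun measurableSet_Ioi fun t ht => ?_
  rw [smul_eq_mul, mul_comm]
  push_cast
  rfl

lemma aux_exp_eq_mellinInv {c y : ℝ} (hc : 0 < c) (hy : 0 < y) :
    (1 / (2 * π)) • ∫ t : ℝ, (y : ℂ) ^ (-((c : ℂ) + (t : ℂ) * Complex.I)) *
      Complex.Gamma ((c : ℂ) + (t : ℂ) * Complex.I) = Complex.exp (-(y : ℂ)) := by
  set f : ℝ → ℂ := fun t => Complex.exp (-(t : ℂ)) with hf
  have hconv : MellinConvergent f c := by
    refine (Complex.GammaIntegral_convergent (s := (c : ℂ)) (by simpa using hc)).congr_fun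
      (fun t ht => ?_) measurableSet_Ioi
    rw [smul_eq_mul, mul_comm]
    push_cast
    rfl
  have hvert : Complex.VerticalIntegrable (mellin f) c := by
    exact (aux_Gamma_integrable hc).congr (Eventually.of_forall fun t =>
      (aux_mellin_exp (by simp [hc])).symm)
  have h := mellinInv_mellin_eq c f hy hconv hvert (by fun_prop)
  rw [mellinInv] at h
  rw [show Complex.exp (-(y : ℂ)) = f y from rfl, ← h]
  congr 1
  refine integral_congr_ae (Eventually.of_forall fun t => ?_)
  show _ = _ • mellin f _
  rw [smul_eq_mul]
  exact congrArg _ (aux_mellin_exp (by simp [hc])).symm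


lemma aux_rpow_cpow {r : ℝ} (hr : 0 < r) (a : ℝ) (s : ℂ) :
    ((r ^ a : ℝ) : ℂ) ^ s = (r : ℂ) ^ ((a : ℂ) * s) := by
  have h1 : ((r ^ a : ℝ) : ℂ) ≠ 0 := by
    simp only [ne_eq, Complex.ofReal_eq_zero]
    positivity
  have h2 : (r : ℂ) ≠ 0 := by simp [ne_of_gt hr]
  rw [Complex.cpow_def_of_ne_zero h1, Complex.cpow_def_of_ne_zero h2,
    ← Complex.ofReal_log (le_of_lt (Real.rpow_pos_of_pos hr a)),
    ← Complex.ofReal_log hr.le, Real.log_rpow hr]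
  push_cast
  ring_nf

lemma aux_conv_one_one (n : ℕ) : ((1 : ℕ → ℂ) ⍟ 1) n = (n.divisors.card : ℂ) := by
  rw [LSeries.convolution_def]
  simp only [Pi.one_apply, one_mul, Finset.sum_const, nsmul_eq_mul, mul_one]
  rw [← Nat.map_div_right_divisors, Finset.card_map]

lemma aux_zeta_sq {w : ℂ} (hw : 1 < w.re) :
    riemannZeta w ^ 2 = ∑' n : ℕ, (n.divisors.card : ℂ) / (n : ℂ) ^ w := by
  have h1 : LSeriesSummable 1 w := LSeriesSummable_one_iff.mpr hw
  rw [sq, ← LSeries_one_eq_riemannZeta hw, ← LSeries_convolution' h1 h1, LSeries]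
  refine tsum_congr fun n => ?_
  rcases eq_or_ne n 0 with rfl | hn
  · simp [LSeries.term_zero, Nat.divisors_zero]
  · rw [LSeries.term_of_ne_zero hn, aux_conv_one_one]

lemma aux_summable_div {σ : ℝ} (hσ : 1 < σ) :
    Summable (fun n : ℕ => (n.divisors.card : ℝ) / (n : ℝ) ^ σ) := by
  have h1 : LSeriesSummable 1 (σ : ℂ) := LSeriesSummable_one_iff.mpr (by simpa using hσ)
  have h2 : LSeriesSummable ((1 : ℕ → ℂ) ⍟ 1) (σ : ℂ) := h1.convolution h1
  rw [LSeriesSummable] at h2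
  have h3 : ∀ n : ℕ, LSeries.term ((1 : ℕ → ℂ) ⍟ 1) (σ : ℂ) n =
      (((n.divisors.card : ℝ) / (n : ℝ) ^ σ : ℝ) : ℂ) := by
    intro n
    rcases eq_or_ne n 0 with rfl | hn
    · simp [LSeries.term_zero, Real.zero_rpow (by linarith : σ ≠ 0)]
    · rw [LSeries.term_of_ne_zero hn, aux_conv_one_one,
        show ((n : ℂ)) = ((n : ℝ) : ℂ) by push_cast; rfl,
        ← Complex.ofReal_cpow (Nat.cast_nonneg n) σ,
        show ((n.divisors.card : ℂ)) = ((n.divisors.card : ℝ) : ℂ) by push_cast; rfl,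
        ← Complex.ofReal_div]
  exact Complex.summable_ofReal.mp ((summable_congr fun n => h3 n).mp h2)


/-- Mellin–Barnes identity for the divisor function `d(n)`. -/
theorem mellin_barnes_divisor (x a : ℝ) (b : ℂ) (c : ℝ)
    (hx : 0 < x) (ha : 0 < a) (hc0 : 0 < c) (hc : (1 - b.re) / a < c) :
    (2 * (π : ℂ) * Complex.I)⁻¹ *
      (Complex.I * ∫ t : ℝ, Complex.Gamma ((c : ℂ) + (t : ℂ) * Complex.I) *
        riemannZeta ((a : ℂ) * ((c : ℂ) + (t : ℂ) * Complex.I) + b) ^ 2 *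
        (x : ℂ) ^ (-((c : ℂ) + (t : ℂ) * Complex.I))) =
    ∑' n : ℕ, ((n + 1 : ℕ).divisors.card : ℂ) / ((n + 1 : ℕ) : ℂ) ^ b *
      Complex.exp (-((((n + 1 : ℕ) : ℝ) ^ a * x : ℝ) : ℂ)) := by
  set S : ℝ → ℂ := fun t => (c : ℂ) + (t : ℂ) * Complex.I with hS
  set W : ℝ → ℂ := fun t => (a : ℂ) * S t + b with hW
  set σ : ℝ := a * c + b.re with hσdef
  have hσ : 1 < σ := by
    rw [div_lt_iff₀ ha] at hc
    simp only [hσdef]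
    nlinarith
  have hSre : ∀ t, (S t).re = c := fun t => by simp [hS]
  have hWre : ∀ t, (W t).re = σ := fun t => by
    simp [hW, hS, Complex.add_re, Complex.mul_re, hσdef]
  -- the summands
  set F : ℕ → ℝ → ℂ := fun n t =>
    Complex.Gamma (S t) * ((n.divisors.card : ℂ) * (n : ℂ) ^ (-(W t))) *
      (x : ℂ) ^ (-(S t)) with hF
  have hF0 : F 0 = fun _ => 0 := by
    funext t; simp [hF]
  -- pointwise expansion of the integrand
  have hsum : ∀ t : ℝ,
      Complex.Gamma (S t) * riemannZeta (W t) ^ 2 * (x : ℂ) ^ (-(S t)) = ∑' n, F n t := by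
    intro t
    rw [aux_zeta_sq (by rw [hWre]; exact hσ), ← tsum_mul_left, ← tsum_mul_right]
    refine tsum_congr fun n => ?_
    rcases eq_or_ne n 0 with rfl | hn
    · simp [hF]
    · simp only [hF, Complex.cpow_neg, div_eq_mul_inv]
  -- norms
  have hΓint := aux_Gamma_integrable hc0
  have hnorm : ∀ (n : ℕ), n ≠ 0 → ∀ t : ℝ, ‖F n t‖ =
      ((n.divisors.card : ℝ) * (n : ℝ) ^ (-σ) * x ^ (-c)) *
        ‖Complex.Gamma (S t)‖ := by
    intro n hn t
    have hn' : 0 < n := Nat.pos_of_ne_zero hn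
    rw [hF]
    simp only [norm_mul]
    rw [Complex.norm_natCast, norm_natCast_cpow_of_pos hn',
      show ‖(x : ℂ) ^ (-(S t))‖ = x ^ (-(S t)).re by
        rw [Complex.norm_cpow_eq_rpow_re_of_pos hx]]
    have h1 : (-(W t)).re = -σ := by rw [Complex.neg_re, hWre]
    have h2 : (-(S t)).re = -c := by rw [Complex.neg_re, hSre]
    rw [h1, h2]
    ring
  have hcont : ∀ (n : ℕ), n ≠ 0 → Continuous (F n) := by
    intro n hn
    have hn0 : (n : ℂ) ≠ 0 := Nat.cast_ne_zero.mpr hn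
    have hΓ : Continuous fun t : ℝ => Complex.Gamma (S t) := by
      refine continuous_iff_continuousAt.mpr fun t => ?_
      refine (Complex.differentiableAt_Gamma _ fun m => ?_).continuousAt.comp (by fun_prop)
      intro h
      have := congrArg Complex.re h
      simp [hS] at this
      have hm : (0:ℝ) ≤ (m : ℝ) := m.cast_nonneg
      nlinarith
    have hSc : Continuous S := by fun_prop
    have hWc : Continuous W := by rw [hW]; fun_prop
    have h2 : Continuous fun t : ℝ => (n : ℂ) ^ (-(W t)) :=
      continuous_const.cpow hWc.neg (fun _ => Or.inl (by simpa using Nat.pos_of_ne_zero hn))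
    have h3 : Continuous fun t : ℝ => (x : ℂ) ^ (-(S t)) :=
      continuous_const.cpow hSc.neg (fun _ => Or.inl (by simpa using hx))
    rw [hF]
    fun_prop
  have hFint : ∀ n : ℕ, Integrable (F n) := by
    intro n
    rcases eq_or_ne n 0 with rfl | hn
    · rw [hF0]; exact integrable_zero _ _ _
    · refine Integrable.mono'
        (hΓint.norm.const_mul ((n.divisors.card : ℝ) * (n : ℝ) ^ (-σ) * x ^ (-c)))
        (hcont n hn).aestronglyMeasurable (Eventually.of_forall fun t => ?_)
      exact le_of_eq (hnorm n hn t)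
  set C : ℝ := x ^ (-c) * ∫ t : ℝ, ‖Complex.Gamma (S t)‖ with hCdef
  have hCnonneg : 0 ≤ C := by
    apply mul_nonneg (Real.rpow_nonneg hx.le _)
    exact integral_nonneg fun t => norm_nonneg _
  have hsummable : Summable fun n : ℕ => ∫ t : ℝ, ‖F n t‖ := by
    refine Summable.of_nonneg_of_le
      (fun n => integral_nonneg fun t => norm_nonneg _)
      (fun n => ?_) ((aux_summable_div hσ).mul_right C)
    rcases eq_or_ne n 0 with rfl | hn
    · rw [hF0]
      simp [Real.zero_rpow (by positivity : σ ≠ 0)]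
    · have : ∫ t : ℝ, ‖F n t‖ =
          ((n.divisors.card : ℝ) * (n : ℝ) ^ (-σ) * x ^ (-c)) *
            ∫ t : ℝ, ‖Complex.Gamma (S t)‖ := by
        rw [← integral_const_mul]
        exact integral_congr_ae (Eventually.of_forall fun t => hnorm n hn t)
      rw [this, hCdef]
      have hn' : 0 < (n : ℝ) := by exact_mod_cast Nat.pos_of_ne_zero hn
      rw [Real.rpow_neg hn'.le, ← div_eq_mul_inv]
      ring_nf
      exact le_of_eq (by ring)
  -- interchange
  have hswap : (∫ t : ℝ, Complex.Gamma (S t) * riemannZeta (W t) ^ 2 * (x : ℂ) ^ (-(S t))) =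
      ∑' n : ℕ, ∫ t : ℝ, F n t := by
    rw [show (fun t : ℝ => Complex.Gamma (S t) * riemannZeta (W t) ^ 2 * (x : ℂ) ^ (-(S t)))
        = fun t => ∑' n, F n t from funext hsum]
    exact (integral_tsum_of_summable_integral_norm hFint hsummable).symm
  -- evaluate each term
  have hterm : ∀ (n : ℕ), n ≠ 0 → (∫ t : ℝ, F n t) =
      (2 * (π : ℝ)) • ((n.divisors.card : ℂ) * (n : ℂ) ^ (-b) *
        Complex.exp (-(((n : ℝ) ^ a * x : ℝ) : ℂ))) := by
    intro n hn
    have hn' : (0:ℝ) < (n : ℝ) := by exact_mod_cast Nat.pos_of_ne_zero hn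
    have hn0 : (n : ℂ) ≠ 0 := Nat.cast_ne_zero.mpr hn
    have hy : 0 < (n : ℝ) ^ a * x := mul_pos (Real.rpow_pos_of_pos hn' a) hx
    have hFeq : ∀ t : ℝ, F n t = ((n.divisors.card : ℂ) * (n : ℂ) ^ (-b)) *
        ((((n : ℝ) ^ a * x : ℝ) : ℂ) ^ (-(S t)) * Complex.Gamma (S t)) := by
      intro t
      simp only [hF]
      have e1 : -(W t) = -b + (a : ℂ) * (-(S t)) := by rw [hW]; ring
      rw [e1, Complex.cpow_add _ _ hn0]
      have e2 : (n : ℂ) ^ ((a : ℂ) * (-(S t))) = (((n : ℝ) ^ a : ℝ) : ℂ) ^ (-(S t)) := by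
        rw [aux_rpow_cpow hn' a (-(S t))]
        norm_num
      have e3 : ((((n : ℝ) ^ a * x : ℝ)) : ℂ) ^ (-(S t)) =
          ((((n : ℝ) ^ a : ℝ)) : ℂ) ^ (-(S t)) * ((x : ℝ) : ℂ) ^ (-(S t)) := by
        rw [Complex.ofReal_mul]
        exact mul_cpow_ofReal_nonneg (Real.rpow_nonneg hn'.le a) hx.le _
      rw [e2, e3]
      ring
    rw [integral_congr_ae (Eventually.of_forall fun t => hFeq t), integral_const_mul]
    have hmel := aux_exp_eq_mellinInv hc0 hy
    have h2π : (2 * π) ≠ 0 := by positivity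
    have : (∫ t : ℝ, ((((n : ℝ) ^ a * x : ℝ)) : ℂ) ^ (-(S t)) * Complex.Gamma (S t)) =
        (2 * (π : ℝ)) • Complex.exp (-((((n : ℝ) ^ a * x : ℝ)) : ℂ)) := by
      rw [← hmel, smul_smul]
      rw [show (2 * π) * (1 / (2 * π)) = 1 by field_simp, one_smul]
    rw [this, mul_smul_comm]
  -- final assembly
  have key : (2 * (π : ℂ) * Complex.I)⁻¹ * Complex.I = ((2 * (π : ℝ)) : ℂ)⁻¹ := by
    have hπ : ((π : ℂ)) ≠ 0 := Complex.ofReal_ne_zero.mpr Real.pi_ne_zero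
    field_simp
  set g : ℕ → ℂ := fun n => (n.divisors.card : ℂ) / (n : ℂ) ^ b *
      Complex.exp (-(((n : ℝ) ^ a * x : ℝ) : ℂ)) with hg
  have hgterm : ∀ n : ℕ, ((2 * (π : ℝ)) : ℂ)⁻¹ * ∫ t : ℝ, F n t = g n := by
    intro n
    rcases eq_or_ne n 0 with rfl | hn
    · rw [hF0, hg]
      simp
    · rw [hterm n hn, hg]
      have h2π : ((2 * (π : ℝ)) : ℂ) ≠ 0 := by
        simp [Real.pi_ne_zero]
      have hn0 : (n : ℂ) ≠ 0 := Nat.cast_ne_zero.mpr hn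
      rw [Complex.real_smul]
      push_cast
      rw [Complex.cpow_neg, div_eq_mul_inv]
      field_simp
  calc (2 * (π : ℂ) * Complex.I)⁻¹ *
      (Complex.I * ∫ t : ℝ, Complex.Gamma (S t) * riemannZeta (W t) ^ 2 * (x : ℂ) ^ (-(S t)))
      = ((2 * (π : ℝ)) : ℂ)⁻¹ * ∑' n : ℕ, ∫ t : ℝ, F n t := by
        rw [← mul_assoc, key, hswap]
    _ = ∑' n : ℕ, ((2 * (π : ℝ)) : ℂ)⁻¹ * ∫ t : ℝ, F n t := by rw [tsum_mul_left]
    _ = ∑' n : ℕ, g n := tsum_congr hgterm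
    _ = g 0 + ∑' n : ℕ, g (n + 1) := by
        refine Summable.tsum_eq_zero_add ?_
        have hsInt : Summable fun n : ℕ => ∫ t : ℝ, F n t :=
          Summable.of_norm (Summable.of_nonneg_of_le (fun n => norm_nonneg _)
            (fun n => norm_integral_le_integral_norm _) hsummable)
        exact (summable_congr hgterm).mp (hsInt.mul_left _)
    _ = ∑' n : ℕ, ((n + 1 : ℕ).divisors.card : ℂ) / ((n + 1 : ℕ) : ℂ) ^ b *
        Complex.exp (-((((n + 1 : ℕ) : ℝ) ^ a * x : ℝ) : ℂ)) := by
        rw [hg]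
        simp
end

section
/- For every natural number $N$, as $x \to 0^+$ we have $\sum_{n=1}^{\infty} e^{-n^2 x} = \frac{1}{2}\sqrt{\pi/x} - \frac{1}{2} + o(x^N)$. -/
open Real Filter Asymptotics

lemma summable_base {c : ℝ} (hc : 0 < c) :
    Summable fun n : ℕ => Real.exp (-(c * (n : ℝ) ^ 2)) := by
  refine Summable.of_nonneg_of_le (fun n => (Real.exp_pos _).le) (fun n => ?_)
    (summable_geometric_of_lt_one (Real.exp_pos (-c)).le
      (Real.exp_lt_one_iff.mpr (by linarith)))
  rw [← Real.exp_nat_mul]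
  apply Real.exp_le_exp.mpr
  have hn : (n : ℝ) ≤ (n : ℝ) ^ 2 := by
    rcases Nat.eq_zero_or_pos n with h | h
    · simp [h]
    · have h1 : (1 : ℝ) ≤ (n : ℝ) := by exact_mod_cast h
      nlinarith
  nlinarith

lemma summable_tail {c : ℝ} (hc : 0 < c) :
    Summable fun n : ℕ => Real.exp (-(c * ((n : ℝ) + 1) ^ 2)) := by
  have := (summable_nat_add_iff 1).mpr (summable_base hc)
  convert this using 2 with n
  · rfl
  push_cast
  ring_nf

lemma int_split {c : ℝ} (hc : 0 < c) :
    (∑' n : ℤ, Real.exp (-(c * (n : ℝ) ^ 2))) =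
      1 + 2 * ∑' n : ℕ, Real.exp (-(c * ((n : ℝ) + 1) ^ 2)) := by
  have hs : Summable fun n : ℕ => Real.exp (-(c * (n : ℝ) ^ 2)) := summable_base hc
  have hs' : Summable fun n : ℕ => Real.exp (-(c * ((n : ℝ) + 1) ^ 2)) := summable_tail hc
  have h1 : (∑' n : ℤ, Real.exp (-(c * (n : ℝ) ^ 2))) =
      (∑' n : ℕ, Real.exp (-(c * (n : ℝ) ^ 2))) +
        ∑' n : ℕ, Real.exp (-(c * ((n : ℝ) + 1) ^ 2)) := by
    rw [tsum_of_nat_of_neg_add_one (f := fun n : ℤ => Real.exp (-(c * (n : ℝ) ^ 2)))]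
    · congr 1
      · refine tsum_congr fun n => ?_
        have hcast : ((-((n : ℤ) + 1) : ℤ) : ℝ) ^ 2 = ((n : ℝ) + 1) ^ 2 := by push_cast; ring
        rw [hcast]
    · simpa using hs
    · convert hs' using 2 with n
      push_cast
      congr 1
      ring
  have h2 : (∑' n : ℕ, Real.exp (-(c * (n : ℝ) ^ 2))) =
      1 + ∑' n : ℕ, Real.exp (-(c * ((n : ℝ) + 1) ^ 2)) := by
    rw [hs.tsum_eq_zero_add]
    congr 1
    · norm_num
    · apply tsum_congr
      intro n
      push_cast
      ring_nf
  rw [h1, h2]; ring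

lemma poisson_form {x : ℝ} (hx : 0 < x) :
    (∑' n : ℤ, Real.exp (-(x * (n : ℝ) ^ 2))) =
      Real.sqrt (π / x) * ∑' n : ℤ, Real.exp (-(π ^ 2 / x * (n : ℝ) ^ 2)) := by
  have hpi : (0 : ℝ) < π := Real.pi_pos
  have ha : 0 < x / π := div_pos hx hpi
  have := Real.tsum_exp_neg_mul_int_sq ha
  have e1 : -π * (x / π) = -x := by field_simp
  have e2 : -π / (x / π) = -(π ^ 2 / x) := by rw [div_div_eq_mul_div]; ring
  have e3 : 1 / (x / π) ^ (1 / 2 : ℝ) = Real.sqrt (π / x) := by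
    rw [← Real.sqrt_eq_rpow, one_div, ← Real.sqrt_inv, inv_div]
  rw [e1, e2, e3] at this
  have l1 : (∑' n : ℤ, Real.exp (-(x * (n : ℝ) ^ 2))) = ∑' n : ℤ, Real.exp (-x * (n : ℝ) ^ 2) :=
    tsum_congr fun n => by congr 1; ring
  have l2 : (∑' n : ℤ, Real.exp (-(π ^ 2 / x * (n : ℝ) ^ 2))) =
      ∑' n : ℤ, Real.exp (-(π ^ 2 / x) * (n : ℝ) ^ 2) :=
    tsum_congr fun n => by congr 1; ring
  rw [l1, l2, this]

lemma key_identity {x : ℝ} (hx : 0 < x) :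
    (∑' n : ℕ, Real.exp (-(((n + 1 : ℕ) : ℝ) ^ 2 * x))) -
      (Real.sqrt (π / x) / 2 - 1 / 2) =
      Real.sqrt (π / x) * ∑' n : ℕ, Real.exp (-(π ^ 2 / x * ((n : ℝ) + 1) ^ 2)) := by
  have hc : 0 < π ^ 2 / x := div_pos (by positivity) hx
  have hS : (∑' n : ℕ, Real.exp (-(((n + 1 : ℕ) : ℝ) ^ 2 * x))) =
      ∑' n : ℕ, Real.exp (-(x * ((n : ℝ) + 1) ^ 2)) := by
    apply tsum_congr
    intro n
    push_cast
    ring_nf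
  have h1 := int_split hx
  have h2 := int_split hc
  have h3 := poisson_form hx
  rw [h1, h2] at h3
  rw [hS]
  linarith [h3]

lemma little_o_aux (N : ℕ) :
    (fun x : ℝ => x⁻¹ * Real.exp (-(π ^ 2 / x))) =o[nhdsWithin 0 (Set.Ioi 0)]
      fun x : ℝ => x ^ N := by
  have hpi : (0 : ℝ) < π ^ 2 := by positivity
  rw [isLittleO_iff_tendsto']
  · have h1 : Tendsto (fun x : ℝ => π ^ 2 / x) (nhdsWithin 0 (Set.Ioi 0)) atTop := by
      simp only [div_eq_mul_inv]
      exact Tendsto.const_mul_atTop hpi tendsto_inv_nhdsGT_zero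
    have h2 : Tendsto (fun y : ℝ => (y / π ^ 2) ^ (N + 1) * Real.exp (-y)) atTop (nhds 0) := by
      have := (tendsto_pow_mul_exp_neg_atTop_nhds_zero (N + 1)).const_mul ((π ^ 2)⁻¹ ^ (N + 1))
      rw [mul_zero] at this
      convert this using 2 with y
      rw [div_pow]
      ring
    have h3 := h2.comp h1
    apply h3.congr'
    filter_upwards [self_mem_nhdsWithin] with x hx
    have hx0 : x ≠ 0 := ne_of_gt hx
    simp only [Function.comp_apply]
    rw [div_div_cancel_left']
    · field_simp
      rw [div_pow, one_pow, pow_succ]; field_simp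
    · exact hpi.ne'
  · filter_upwards [self_mem_nhdsWithin] with x hx h
    exact absurd h (pow_ne_zero _ (ne_of_gt hx))

/-- `∑_{n≥1} e^{-n² x} = √(π/x)/2 - 1/2 + o(xᴺ)` as `x → 0⁺`. -/
theorem theta_asymp (N : ℕ) :
    (fun x : ℝ => (∑' n : ℕ, Real.exp (-(((n + 1 : ℕ) : ℝ) ^ 2 * x))) -
      (Real.sqrt (π / x) / 2 - 1 / 2)) =o[nhdsWithin 0 (Set.Ioi 0)]
    fun x : ℝ => x ^ N := by
  have hpi : (0 : ℝ) < π := Real.pi_pos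
  have hO : (fun x : ℝ => Real.sqrt (π / x) *
      ∑' n : ℕ, Real.exp (-(π ^ 2 / x * ((n : ℝ) + 1) ^ 2))) =O[nhdsWithin 0 (Set.Ioi 0)]
      fun x : ℝ => x⁻¹ * Real.exp (-(π ^ 2 / x)) := by
    apply IsBigO.of_bound (4 * π)
    filter_upwards [Ioo_mem_nhdsGT_of_mem (Set.mem_Ico.mpr ⟨le_refl (0 : ℝ), one_pos⟩)]
      with x hx
    obtain ⟨hx0, hx1⟩ := hx
    have hc : 0 < π ^ 2 / x := div_pos (by positivity) hx0
    set r : ℝ := Real.exp (-(π ^ 2 / x)) with hr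
    have hr0 : 0 < r := Real.exp_pos _
    have hrhalf : r ≤ 1 / 2 := by
      have h1 : (1 : ℝ) ≤ π ^ 2 / x := by
        rw [le_div_iff₀ hx0]
        nlinarith [Real.pi_gt_three]
      have : r ≤ Real.exp (-1) := by
        apply Real.exp_le_exp.mpr
        linarith
      have he : Real.exp (-1) ≤ 1 / 2 := by
        rw [Real.exp_neg]
        rw [inv_le_iff_one_le_mul₀ (Real.exp_pos 1)]
        nlinarith [Real.add_one_le_exp (1 : ℝ)]
      linarith
    have hr1 : r < 1 := by linarith
    -- tail sum bound
    have hT : (∑' n : ℕ, Real.exp (-(π ^ 2 / x * ((n : ℝ) + 1) ^ 2))) ≤ 2 * r := by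
      have hgeo : Summable fun n : ℕ => r ^ (n + 1) := by
        apply Summable.of_nonneg_of_le (fun n => by positivity)
          (fun n => pow_le_pow_of_le_one hr0.le hr1.le (Nat.le_succ n))
        exact summable_geometric_of_lt_one hr0.le hr1
      have hle : ∀ n : ℕ, Real.exp (-(π ^ 2 / x * ((n : ℝ) + 1) ^ 2)) ≤ r ^ (n + 1) := by
        intro n
        rw [hr, ← Real.exp_nat_mul]
        apply Real.exp_le_exp.mpr
        have hn1 : (1 : ℝ) ≤ (n : ℝ) + 1 := by linarith [Nat.cast_nonneg (α := ℝ) n]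
        have : ((n : ℝ) + 1) ≤ ((n : ℝ) + 1) ^ 2 := by nlinarith
        push_cast
        nlinarith
      have hsum : (∑' n : ℕ, Real.exp (-(π ^ 2 / x * ((n : ℝ) + 1) ^ 2))) ≤
          ∑' n : ℕ, r ^ (n + 1) :=
        Summable.tsum_le_tsum hle (summable_tail hc) hgeo
      have hgeoval : (∑' n : ℕ, r ^ (n + 1)) = r * (1 - r)⁻¹ := by
        have : (∑' n : ℕ, r ^ (n + 1)) = ∑' n : ℕ, r * r ^ n := by
          apply tsum_congr; intro n; ring
        rw [this, tsum_mul_left, tsum_geometric_of_lt_one hr0.le hr1]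
      have hfinal : r * (1 - r)⁻¹ ≤ 2 * r := by
        have h12 : (1 : ℝ) / 2 ≤ 1 - r := by linarith
        have : (1 - r)⁻¹ ≤ 2 := by
          rw [inv_le_iff_one_le_mul₀ (by linarith : (0:ℝ) < 1 - r)]
          linarith
        nlinarith
      linarith
    have hT0 : 0 ≤ ∑' n : ℕ, Real.exp (-(π ^ 2 / x * ((n : ℝ) + 1) ^ 2)) :=
      tsum_nonneg fun n => (Real.exp_pos _).le
    have hsqrt : Real.sqrt (π / x) ≤ π / x := by
      have h1 : (1 : ℝ) ≤ π / x := by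
        rw [le_div_iff₀ hx0]; nlinarith [Real.pi_gt_three]
      have h2 : π / x ≤ (π / x) ^ 2 := by nlinarith
      calc Real.sqrt (π / x) ≤ Real.sqrt ((π / x) ^ 2) := Real.sqrt_le_sqrt h2
        _ = π / x := Real.sqrt_sq (by linarith)
    have hsqrt0 : 0 ≤ Real.sqrt (π / x) := Real.sqrt_nonneg _
    rw [Real.norm_eq_abs, Real.norm_eq_abs, abs_of_nonneg (mul_nonneg hsqrt0 hT0),
      abs_of_nonneg (mul_nonneg (inv_nonneg.mpr hx0.le) hr0.le)]
    calc Real.sqrt (π / x) * ∑' n : ℕ, Real.exp (-(π ^ 2 / x * ((n : ℝ) + 1) ^ 2))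
        ≤ (π / x) * (2 * r) := by
          apply mul_le_mul hsqrt hT hT0 (by positivity)
      _ = 4 * π * (x⁻¹ * r) / 2 := by field_simp; ring
      _ ≤ 4 * π * (x⁻¹ * r) := by
          have : 0 ≤ 4 * π * (x⁻¹ * r) := by positivity
          linarith
  have ho := hO.trans_isLittleO (little_o_aux N)
  apply ho.congr'
  · filter_upwards [self_mem_nhdsWithin] with x hx
    exact (key_identity hx).symm
  · exact EventuallyEq.rfl
end
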